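/- Let n ≥ 1 and let ψ ∈ ℂⁿ be a unit vector (∑ᵢ |ψᵢ|² = 1), and let ρ = ψψᴴ be the associated rank-one projection (ρᵢⱼ = ψᵢ · conj(ψⱼ)). Then the robustness of imaginarity of ρ equals √(1 − |∑ᵢ ψᵢ²|²), i.e. (1/2)‖ρ − ρᵀ‖₁ = √(1 − |∑ᵢ ψᵢ²|²). (Here ∑ᵢ ψᵢ² = ⟨ψ*, ψ⟩ is the inner product of the entrywise complex conjugate of ψ with ψ.) -/

import Mathlib

open Matrix Kronecker
open scoped ComplexOrder

/-- Trace norm of a square complex matrix: `Tr[sqrt(Aᴴ A)]`. -/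
noncomputable def traceNorm {n : Type*} [Fintype n] [DecidableEq n]
    (A : Matrix n n ℂ) : ℝ :=
  (((Matrix.posSemidef_conjTranspose_mul_self A).1.eigenvectorUnitary : Matrix n n ℂ) *
    diagonal (((↑) : ℝ → ℂ) ∘ (√·) ∘ (Matrix.posSemidef_conjTranspose_mul_self A).1.eigenvalues) *
    (star (Matrix.posSemidef_conjTranspose_mul_self A).1.eigenvectorUnitary : Matrix n n ℂ)).trace.re

/-- Robustness of imaginarity: `(1/2) ‖ρ - ρᵀ‖₁`. -/
noncomputable def roi {n : Type*} [Fintype n] [DecidableEq n]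
    (ρ : Matrix n n ℂ) : ℝ :=
  (1 / 2) * traceNorm (ρ - ρ.transpose)

lemma vvmul {n : Type*} [Fintype n] (a b c d : n → ℂ) :
    Matrix.vecMulVec a b * Matrix.vecMulVec c d
      = (b ⬝ᵥ c) • Matrix.vecMulVec a d := by
  ext i j
  simp only [Matrix.mul_apply, Matrix.vecMulVec_apply, Matrix.smul_apply,
    smul_eq_mul, dotProduct, Finset.sum_mul]
  exact Finset.sum_congr rfl fun k _ => by ring

lemma eq_sqrt_expr {m : Type*} [Fintype m] [DecidableEq m] {M : Matrix m m ℂ}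
    (hM : M.PosSemidef) (S : Matrix m m ℂ) (hS : S.PosSemidef) (h : S ^ 2 = M) :
    S = (hM.1.eigenvectorUnitary : Matrix m m ℂ) *
      diagonal (((↑) : ℝ → ℂ) ∘ (√·) ∘ hM.1.eigenvalues) *
      (star hM.1.eigenvectorUnitary : Matrix m m ℂ) := by
  open MatrixOrder in
  have e : CFC.sqrt M = S := CFC.sqrt_unique (by rw [← h, sq])
    (Matrix.nonneg_iff_posSemidef.mpr hS)
  open MatrixOrder in
  rw [CFC.sqrt_eq_cfc, cfc_nnreal_eq_real _ M (Matrix.nonneg_iff_posSemidef.mpr hM),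
    hM.1.cfc_eq] at e
  rw [← e]
  simp only [IsHermitian.cfc, Unitary.conjStarAlgAut_apply]
  congr 3
  funext x
  simp only [Function.comp_apply, Real.coe_sqrt, Real.coe_toNNReal',
    max_eq_left (hM.eigenvalues_nonneg x)]
  rfl

lemma trace_vv {n : Type*} [Fintype n] (a b : n → ℂ) :
    (Matrix.vecMulVec a b).trace = a ⬝ᵥ b := by
  simp [Matrix.trace, Matrix.diag, Matrix.vecMulVec_apply, dotProduct]

theorem stmt0 (n : ℕ) (hn : 1 ≤ n) (ψ : Fin n → ℂ)
    (hψ : ∑ i, ‖ψ i‖ ^ 2 = 1) :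
    roi (Matrix.vecMulVec ψ (star ψ)) =
      Real.sqrt (1 - ‖∑ i, ψ i ^ 2‖ ^ 2) := by
  classical
  set s : ℂ := ∑ i, ψ i ^ 2 with hs
  set L : ℝ := 1 - ‖s‖ ^ 2 with hLdef
  set φ : Fin n → ℂ := star ψ with hφ
  set P : Matrix (Fin n) (Fin n) ℂ := Matrix.vecMulVec ψ φ with hPdef
  set Q : Matrix (Fin n) (Fin n) ℂ := Matrix.vecMulVec φ ψ with hQdef
  -- dot products
  have h1 : φ ⬝ᵥ ψ = 1 := by
    have e : ∀ i, φ i * ψ i = ((‖ψ i‖ ^ 2 : ℝ) : ℂ) := fun i => by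
      rw [hφ, Pi.star_apply, RCLike.star_def, mul_comm, Complex.mul_conj,
        Complex.normSq_eq_norm_sq]
    simp only [dotProduct, e]
    rw [← Complex.ofReal_sum, hψ, Complex.ofReal_one]
  have h2 : ψ ⬝ᵥ φ = 1 := by rw [dotProduct_comm]; exact h1
  have h4 : ψ ⬝ᵥ ψ = s := by
    simp only [dotProduct, hs, sq]
  have h3 : φ ⬝ᵥ φ = (starRingEnd ℂ) s := by
    rw [hs, map_sum]
    simp only [dotProduct, hφ, Pi.star_apply, RCLike.star_def, sq, _root_.map_mul]
  have hLC : ((L : ℝ) : ℂ) = 1 - s * (starRingEnd ℂ) s := by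
    rw [hLdef, Complex.sq_norm, Complex.ofReal_sub, Complex.ofReal_one, Complex.mul_conj]
  -- transposes / adjoints
  have hPT : Pᵀ = Q := by
    ext i j
    simp [hPdef, hQdef, Matrix.vecMulVec_apply, mul_comm]
  have hPH : Pᴴ = P := by
    ext i j
    simp [hPdef, Matrix.vecMulVec_apply, hφ, mul_comm]
  have hQH : Qᴴ = Q := by
    ext i j
    simp [hQdef, Matrix.vecMulVec_apply, hφ, mul_comm]
  set A : Matrix (Fin n) (Fin n) ℂ := P - Q with hAdef
  have hAH : Aᴴ = A := by
    rw [hAdef, Matrix.conjTranspose_sub, hPH, hQH]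
  set B : Matrix (Fin n) (Fin n) ℂ := A * A with hBdef
  have hB : Aᴴ * A = B := by rw [hAH, hBdef]
  have expand : B = P + Q - (starRingEnd ℂ) s • Matrix.vecMulVec ψ ψ
      - s • Matrix.vecMulVec φ φ := by
    rw [hBdef, hAdef, sub_mul, mul_sub, mul_sub, hPdef, hQdef,
      vvmul, vvmul, vvmul, vvmul, h1, h2, h3, h4, one_smul, one_smul]
    abel
  have key : B * B = ((L : ℝ) : ℂ) • B := by
    rw [hLC, expand]
    simp only [sub_mul, mul_sub, add_mul, mul_add, Matrix.smul_mul, Matrix.mul_smul,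
      hPdef, hQdef, vvmul, h1, h2, h3, h4, one_smul, smul_smul, smul_sub, smul_add]
    module
  -- trace of B
  have htrB : B.trace = 2 * ((L : ℝ) : ℂ) := by
    rw [expand, hLC]
    rw [Matrix.trace_sub, Matrix.trace_sub, Matrix.trace_add, Matrix.trace_smul,
      Matrix.trace_smul, hPdef, hQdef, trace_vv, trace_vv, trace_vv, trace_vv,
      h1, h2, h3, h4]
    simp only [smul_eq_mul]
    ring
  -- nonnegativity of L
  have habs : ‖s‖ ≤ 1 := by
    calc ‖s‖ ≤ ∑ i, ‖ψ i ^ 2‖ := by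
          rw [hs]; exact norm_sum_le _ _
      _ = ∑ i, ‖ψ i‖ ^ 2 := by simp [norm_pow]
      _ = 1 := hψ
  have hL0 : 0 ≤ L := by
    rw [hLdef]
    nlinarith [norm_nonneg s]
  -- unfold the goal
  unfold roi traceNorm
  rw [hPT]
  rcases eq_or_lt_of_le hL0 with hL | hL
  · -- L = 0 : B = 0
    have hBB0 : B * B = 0 := by rw [key, ← hL]; simp
    have hB0 : B = 0 := by
      have hBH : Bᴴ = B := by
        rw [hBdef, Matrix.conjTranspose_mul, hAH]
      rw [← Matrix.conjTranspose_mul_self_eq_zero (A := B), hBH, hBB0]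
    have hz : (0 : Matrix (Fin n) (Fin n) ℂ) =
        ((Matrix.posSemidef_conjTranspose_mul_self (P - Q)).1.eigenvectorUnitary : Matrix (Fin n) (Fin n) ℂ) *
          diagonal (((↑) : ℝ → ℂ) ∘ (√·) ∘ (Matrix.posSemidef_conjTranspose_mul_self (P - Q)).1.eigenvalues) *
          (star (Matrix.posSemidef_conjTranspose_mul_self (P - Q)).1.eigenvectorUnitary : Matrix (Fin n) (Fin n) ℂ) := by
      refine eq_sqrt_expr (Matrix.posSemidef_conjTranspose_mul_self (P - Q)) _ Matrix.PosSemidef.zero ?_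
      rw [← hAdef, hB, hB0]
      simp
    rw [← hz]
    simp [← hL]
  · -- L > 0
    set c : ℝ := Real.sqrt L with hcdef
    have hc0 : 0 < c := Real.sqrt_pos.mpr hL
    have hcc : c * c = L := Real.mul_self_sqrt hL0
    set S : Matrix (Fin n) (Fin n) ℂ := ((c : ℂ))⁻¹ • B with hSdef
    have hS2 : S ^ 2 = (P - Q)ᴴ * (P - Q) := by
      rw [← hAdef, hB, sq, hSdef, smul_mul_smul_comm, key, smul_smul]
      rw [show ((c:ℂ))⁻¹ * ((c:ℂ))⁻¹ * ((L:ℝ):ℂ) = 1 by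
        field_simp
        norm_cast
        linarith [hcc]]
      rw [one_smul]
    have hSpsd : S.PosSemidef := by
      have hD : S = (((Real.sqrt c⁻¹ : ℝ) : ℂ) • A)ᴴ * (((Real.sqrt c⁻¹ : ℝ) : ℂ) • A) := by
        rw [Matrix.conjTranspose_smul, hAH, Matrix.smul_mul, Matrix.mul_smul,
          smul_smul, ← hBdef, hSdef]
        congr 1
        rw [Complex.star_def, Complex.conj_ofReal]
        norm_cast
        rw [Real.mul_self_sqrt (le_of_lt (inv_pos.mpr hc0))]
      rw [hD]
      exact Matrix.posSemidef_conjTranspose_mul_self _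
    have hsq : S = ((Matrix.posSemidef_conjTranspose_mul_self (P - Q)).1.eigenvectorUnitary : Matrix (Fin n) (Fin n) ℂ) *
          diagonal (((↑) : ℝ → ℂ) ∘ (√·) ∘ (Matrix.posSemidef_conjTranspose_mul_self (P - Q)).1.eigenvalues) *
          (star (Matrix.posSemidef_conjTranspose_mul_self (P - Q)).1.eigenvectorUnitary : Matrix (Fin n) (Fin n) ℂ) :=
      eq_sqrt_expr (Matrix.posSemidef_conjTranspose_mul_self (P - Q)) _ hSpsd hS2
    rw [← hsq, hSdef, Matrix.trace_smul, htrB]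
    simp only [smul_eq_mul]
    rw [show ((c:ℂ))⁻¹ * (2 * ((L:ℝ):ℂ)) = (((c⁻¹ * (2 * L) : ℝ)) : ℂ) by push_cast; ring]
    rw [Complex.ofReal_re]
    have hne : Real.sqrt L ≠ 0 := by rw [← hcdef]; exact ne_of_gt hc0
    field_simp
    nlinarith [hcc, hcdef]
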